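/- Let n ≥ 1 and m ≥ 1 be integers, and let p, q be positive coprime integers with n + 1/m ≤ p/q < n + 1/(m−1) (with the convention 1/0 = +∞). Let r_β = 1 + (mn+1)/(mn+1−m) and r_α = 1 + p/(p−q). Then the negative continued fraction expansion (with all entries ≥ 2, produced by a₀ = ⌈r⌉ and recursion) of r_β is an initial segment of the negative continued fraction expansion of r_α. -/

import Mathlib

/-- The negative continued fraction `[a₀, a₁, …, a_ℓ] = a₀ - 1/(a₁ - 1/(⋯ - 1/a_ℓ))`. -/
def ncf : List ℚ → ℚ
  | [] => 0
  | [a] => a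
  | a :: b :: rest => a - 1 / ncf (b :: rest)

/-- Casting a list of integers to rationals. -/
def qcast : List ℤ → List ℚ := List.map (fun a : ℤ => (a : ℚ))

lemma coe_list (l : List ℤ) : (l.map (fun a => (a : ℚ))) = qcast l := by
  induction l with
  | nil => rfl
  | cons a t ih => simpa [qcast] using ih

@[simp] lemma qcast_nil : qcast [] = [] := rfl
@[simp] lemma qcast_cons (a : ℤ) (l : List ℤ) : qcast (a :: l) = (a:ℚ) :: qcast l := rfl
@[simp] lemma qcast_ne_nil (a : ℤ) (l : List ℤ) : qcast (a :: l) ≠ [] := by simp [qcast]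

/-- the lower end of the interval of values whose expansion starts with the given list -/
def low : List ℤ → ℚ
  | [] => 0
  | [a] => (a : ℚ) - 1
  | a :: b :: rest => (a : ℚ) - 1 / low (b :: rest)

lemma ncf_cons (a : ℚ) (l : List ℚ) (h : l ≠ []) : ncf (a :: l) = a - 1 / ncf l := by
  cases l with
  | nil => exact absurd rfl h
  | cons b t => rfl

lemma ncf_qcast_cons (a : ℤ) (l : List ℤ) (h : l ≠ []) :
    ncf (qcast (a :: l)) = (a:ℚ) - 1 / ncf (qcast l) := by
  rw [qcast_cons, ncf_cons]
  cases l with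
  | nil => exact absurd rfl h
  | cons b t => simp [qcast]

lemma low_cons (a : ℤ) (l : List ℤ) (h : l ≠ []) : low (a :: l) = (a : ℚ) - 1 / low l := by
  cases l with
  | nil => exact absurd rfl h
  | cons b t => rfl

/-- Basic bounds on `ncf` for lists with all entries ≥ 2. -/
lemma ncf_bounds : ∀ (l : List ℤ) (a : ℤ), (∀ x ∈ a :: l, (2:ℤ) ≤ x) →
    ((a:ℚ) - 1 < ncf (qcast (a :: l)) ∧ ncf (qcast (a :: l)) ≤ (a:ℚ)) ∧
    (l ≠ [] → ncf (qcast (a :: l)) < (a:ℚ)) := by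
  intro l
  induction l with
  | nil =>
    intro a _
    simp [ncf, qcast]
  | cons b t ih =>
    intro a h
    have hb : (∀ x ∈ b :: t, (2:ℤ) ≤ x) := fun x hx => h x (List.mem_cons_of_mem a hx)
    obtain ⟨⟨h1, h2⟩, _⟩ := ih b hb
    have hb2 : (2:ℚ) ≤ (b:ℚ) := by exact_mod_cast hb b (List.mem_cons_self)
    have hT : (1:ℚ) < ncf (qcast (b :: t)) := by linarith
    have hT0 : (0:ℚ) < ncf (qcast (b :: t)) := by linarith
    have key : ncf (qcast (a :: b :: t)) = (a:ℚ) - 1 / ncf (qcast (b :: t)) :=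
      ncf_qcast_cons a (b :: t) (List.cons_ne_nil _ _)
    have hinv1 : 1 / ncf (qcast (b :: t)) < 1 := by
      rw [div_lt_one hT0]; exact hT
    have hinv0 : 0 < 1 / ncf (qcast (b :: t)) := by positivity
    refine ⟨⟨by rw [key]; linarith, by rw [key]; linarith⟩, fun _ => by rw [key]; linarith⟩

lemma one_lt_ncf (l : List ℤ) (hne : l ≠ []) (h2 : ∀ x ∈ l, (2:ℤ) ≤ x) :
    (1:ℚ) < ncf (qcast l) := by
  cases l with
  | nil => exact absurd rfl hne
  | cons a t =>
    obtain ⟨⟨h1, _⟩, _⟩ := ncf_bounds t a h2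
    have : (2:ℚ) ≤ (a:ℚ) := by exact_mod_cast h2 a (List.mem_cons_self)
    linarith

/-- Bounds on `low`. -/
lemma low_bounds : ∀ (l : List ℤ) (a : ℤ), (∀ x ∈ a :: l, (2:ℤ) ≤ x) →
    (1:ℚ) ≤ low (a :: l) ∧ low (a :: l) < ncf (qcast (a :: l)) ∧
      (a:ℚ) - 1 ≤ low (a :: l) := by
  intro l
  induction l with
  | nil =>
    intro a h
    have : (2:ℚ) ≤ (a:ℚ) := by exact_mod_cast h a (List.mem_cons_self)
    refine ⟨by simp [low]; linarith, ?_, by simp [low]⟩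
    simp only [low, qcast_cons, qcast_nil, ncf]
    linarith
  | cons b t ih =>
    intro a h
    have hb : (∀ x ∈ b :: t, (2:ℤ) ≤ x) := fun x hx => h x (List.mem_cons_of_mem a hx)
    obtain ⟨hL1, hLT, _⟩ := ih b hb
    have hb2 : (2:ℚ) ≤ (b:ℚ) := by exact_mod_cast hb b (List.mem_cons_self)
    have hT1 : (1:ℚ) < ncf (qcast (b :: t)) := one_lt_ncf _ (List.cons_ne_nil _ _) hb
    have keyl : low (a :: b :: t) = (a:ℚ) - 1 / low (b :: t) := low_cons _ _ (List.cons_ne_nil _ _)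
    have keyn : ncf (qcast (a :: b :: t)) = (a:ℚ) - 1 / ncf (qcast (b :: t)) :=
      ncf_qcast_cons a (b :: t) (List.cons_ne_nil _ _)
    have hL0 : (0:ℚ) < low (b :: t) := by linarith
    have hinvle : 1 / low (b :: t) ≤ 1 := by
      rw [div_le_one hL0]; exact hL1
    have hinvlt : 1 / ncf (qcast (b :: t)) < 1 / low (b :: t) :=
      one_div_lt_one_div_of_lt hL0 hLT
    have ha2 : (2:ℚ) ≤ (a:ℚ) := by exact_mod_cast h a (List.mem_cons_self)
    refine ⟨by rw [keyl]; linarith, by rw [keyl, keyn]; linarith, by rw [keyl]; linarith⟩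

/-- The key structural lemma: if the value of `lα` lies in the half-open interval
`(low lβ, ncf lβ]`, then `lβ` is a prefix of `lα`. -/
lemma prefix_of_between : ∀ (lβ lα : List ℤ), lβ ≠ [] → lα ≠ [] →
    (∀ x ∈ lβ, (2:ℤ) ≤ x) → (∀ x ∈ lα, (2:ℤ) ≤ x) →
    low lβ < ncf (qcast lα) → ncf (qcast lα) ≤ ncf (qcast lβ) →
    lβ <+: lα := by
  intro lβ
  induction lβ with
  | nil => intro lα h; exact absurd rfl h
  | cons a restβ ih =>
    intro lα _ hαne hβ2 hα2 hlo hhi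
    cases lα with
    | nil => exact absurd rfl hαne
    | cons c restα =>
      obtain ⟨⟨hc1, hc2⟩, hcstrict⟩ := ncf_bounds restα c hα2
      obtain ⟨⟨ha1, ha2⟩, hastrict⟩ := ncf_bounds restβ a hβ2
      obtain ⟨hL1, hLlt, hLa⟩ := low_bounds restβ a hβ2
      have hva : ncf (qcast (c :: restα)) ≤ (a:ℚ) := le_trans hhi ha2
      have hva' : (a:ℚ) - 1 < ncf (qcast (c :: restα)) := lt_of_le_of_lt hLa hlo
      have hac : a = c := by
        have h1 : (a:ℚ) - 1 < (c:ℚ) := lt_of_lt_of_le hva' hc2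
        have h2 : (c:ℚ) - 1 < (a:ℚ) := lt_of_lt_of_le hc1 hva
        have h1' : a - 1 < c := by exact_mod_cast h1
        have h2' : c - 1 < a := by exact_mod_cast h2
        omega
      subst hac
      cases restβ with
      | nil => exact ⟨restα, rfl⟩
      | cons b tβ =>
        have hstrict : ncf (qcast (a :: b :: tβ)) < (a:ℚ) := hastrict (List.cons_ne_nil _ _)
        have hrαne : restα ≠ [] := by
          intro hemp
          subst hemp
          have : ncf (qcast [a]) = (a:ℚ) := by simp [qcast, ncf]
          rw [this] at hhi
          linarith
        have hβt2 : ∀ x ∈ b :: tβ, (2:ℤ) ≤ x := fun x hx => hβ2 x (List.mem_cons_of_mem a hx)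
        have hαt2 : ∀ x ∈ restα, (2:ℤ) ≤ x := fun x hx => hα2 x (List.mem_cons_of_mem a hx)
        have keyn : ncf (qcast (a :: b :: tβ)) = (a:ℚ) - 1 / ncf (qcast (b :: tβ)) :=
          ncf_qcast_cons _ _ (List.cons_ne_nil _ _)
        have keyl : low (a :: b :: tβ) = (a:ℚ) - 1 / low (b :: tβ) :=
          low_cons _ _ (List.cons_ne_nil _ _)
        have keyα : ncf (qcast (a :: restα)) = (a:ℚ) - 1 / ncf (qcast restα) :=
          ncf_qcast_cons _ _ hrαne
        obtain ⟨hLb1, hLblt, _⟩ := low_bounds tβ b hβt2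
        have htβ1 : (1:ℚ) < ncf (qcast (b :: tβ)) := one_lt_ncf _ (List.cons_ne_nil _ _) hβt2
        have htα1 : (1:ℚ) < ncf (qcast restα) := one_lt_ncf _ hrαne hαt2
        have hLb0 : (0:ℚ) < low (b :: tβ) := by linarith
        have htα0 : (0:ℚ) < ncf (qcast restα) := by linarith
        have htβ0 : (0:ℚ) < ncf (qcast (b :: tβ)) := by linarith
        rw [keyl, keyα] at hlo
        rw [keyα, keyn] at hhi
        have h1 : 1 / ncf (qcast restα) < 1 / low (b :: tβ) := by linarith
        have h2 : 1 / ncf (qcast (b :: tβ)) ≤ 1 / ncf (qcast restα) := by linarith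
        have hlo' : low (b :: tβ) < ncf (qcast restα) := by
          rwa [div_lt_div_iff₀ htα0 hLb0, one_mul, one_mul] at h1
        have hhi' : ncf (qcast restα) ≤ ncf (qcast (b :: tβ)) := by
          rwa [div_le_div_iff₀ htβ0 htα0, one_mul, one_mul] at h2
        obtain ⟨t, ht⟩ := ih restα (List.cons_ne_nil _ _) hrαne hβt2 hαt2 hlo' hhi'
        exact ⟨t, by rw [List.cons_append, ht]⟩

/-- Uniqueness of negative continued fraction expansions with entries ≥ 2. -/
lemma ncf_unique (l l' : List ℤ) (h : l ≠ []) (h' : l' ≠ [])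
    (h2 : ∀ x ∈ l, (2:ℤ) ≤ x) (h2' : ∀ x ∈ l', (2:ℤ) ≤ x)
    (heq : ncf (qcast l) = ncf (qcast l')) : l = l' := by
  have hl : low l < ncf (qcast l) := by
    cases l with
    | nil => exact absurd rfl h
    | cons a t => exact (low_bounds t a h2).2.1
  have hl' : low l' < ncf (qcast l') := by
    cases l' with
    | nil => exact absurd rfl h'
    | cons a t => exact (low_bounds t a h2').2.1
  have p1 : l <+: l' := prefix_of_between l l' h h' h2 h2' (by rw [← heq]; exact hl) (le_of_eq heq.symm)
  have p2 : l' <+: l := prefix_of_between l' l h' h h2' h2 (by rw [heq]; exact hl') (le_of_eq heq)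
  exact p1.eq_of_length (p1.length_le.antisymm p2.length_le)

/-- The tail list `[2, 2, …, 2, c]`. -/
def t2 (k : ℕ) (c : ℤ) : List ℤ := List.replicate k 2 ++ [c]

lemma t2_ne (k : ℕ) (c : ℤ) : t2 k c ≠ [] := by simp [t2]

lemma t2_mem (k : ℕ) (c : ℤ) (hc : 2 ≤ c) : ∀ x ∈ t2 k c, (2:ℤ) ≤ x := by
  intro x hx
  simp only [t2, List.mem_append, List.mem_replicate, List.mem_singleton] at hx
  rcases hx with ⟨_, rfl⟩ | rfl
  · exact le_refl _
  · exact hc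

lemma t2_ncf (k : ℕ) (c : ℤ) (hc : 2 ≤ c) :
    ncf (qcast (t2 k c)) = (((k:ℚ)+1)*(c:ℚ) - k) / ((k:ℚ)*(c:ℚ) - k + 1) := by
  induction k with
  | zero => simp [t2, ncf, qcast]
  | succ k ih =>
    have hc' : (2:ℚ) ≤ (c:ℚ) := by exact_mod_cast hc
    have hk0 : (0:ℚ) ≤ (k:ℚ) := Nat.cast_nonneg k
    have hden : (0:ℚ) < (k:ℚ)*(c:ℚ) - k + 1 := by nlinarith
    have hnum : (0:ℚ) < ((k:ℚ)+1)*(c:ℚ) - k := by nlinarith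
    have step : t2 (k+1) c = 2 :: t2 k c := by simp [t2, List.replicate_succ]
    rw [step, ncf_qcast_cons _ _ (t2_ne k c), ih]
    push_cast
    rw [one_div_div, sub_div' hnum.ne', div_eq_div_iff hnum.ne' (by nlinarith)]
    ring
  
lemma t2_low (k : ℕ) (c : ℤ) (hc : 2 ≤ c) :
    low (t2 k c) = (((k:ℚ)+1)*(c:ℚ) - 2*k - 1) / ((k:ℚ)*(c:ℚ) - 2*k + 1) := by
  induction k with
  | zero =>
    show (c:ℚ) - 1 = _
    norm_num
  | succ k ih =>
    have hc' : (2:ℚ) ≤ (c:ℚ) := by exact_mod_cast hc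
    have hk0 : (0:ℚ) ≤ (k:ℚ) := Nat.cast_nonneg k
    have hden : (0:ℚ) < (k:ℚ)*(c:ℚ) - 2*k + 1 := by nlinarith
    have hnum : (0:ℚ) < ((k:ℚ)+1)*(c:ℚ) - 2*k - 1 := by nlinarith
    have step : t2 (k+1) c = 2 :: t2 k c := by simp [t2, List.replicate_succ]
    rw [step, low_cons _ _ (t2_ne k c), ih]
    push_cast
    rw [one_div_div, sub_div' hnum.ne', div_eq_div_iff hnum.ne' (by nlinarith)]
    ring

theorem ncf_initial_segment (n m p q : ℤ) (hn : 1 ≤ n) (hm : 1 ≤ m)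
    (hp : 0 < p) (hq : 0 < q) (hcop : IsCoprime p q)
    (hlow : (n : ℚ) + 1 / (m : ℚ) ≤ (p : ℚ) / (q : ℚ))
    (hhigh : m = 1 ∨ (p : ℚ) / (q : ℚ) < (n : ℚ) + 1 / ((m : ℚ) - 1)) :
    ∀ lβ lα : List ℤ, lβ ≠ [] → lα ≠ [] →
      (∀ a ∈ lβ, 2 ≤ a) → (∀ a ∈ lα, 2 ≤ a) →
      ncf (lβ.map (fun a => (a : ℚ)))
        = 1 + ((m : ℚ) * n + 1) / ((m : ℚ) * n + 1 - m) →
      ncf (lα.map (fun a => (a : ℚ)))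
        = 1 + (p : ℚ) / ((p : ℚ) - q) →
      lβ <+: lα := by
  intro lβ lα hβne hαne hβ2 hα2 hβval hαval
  rw [coe_list] at hβval hαval
  -- basic positivity facts
  have hm0 : (0:ℚ) < (m:ℚ) := by exact_mod_cast hm.trans_lt' (by norm_num)
  have hm1 : (1:ℚ) ≤ (m:ℚ) := by exact_mod_cast hm
  have hn1 : (1:ℚ) ≤ (n:ℚ) := by exact_mod_cast hn
  have hq0 : (0:ℚ) < (q:ℚ) := by exact_mod_cast hq
  have hp0 : (0:ℚ) < (p:ℚ) := by exact_mod_cast hp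
  -- clear denominators in hlow
  have hlow' : (q:ℚ)*((m:ℚ)*n+1) ≤ (p:ℚ)*m := by
    have e1 := mul_le_mul_of_nonneg_right hlow (le_of_lt (mul_pos hm0 hq0))
    have l1 : ((n:ℚ)+1/m)*((m:ℚ)*q) = q*((m:ℚ)*n+1) := by field_simp
    have l2 : ((p:ℚ)/q)*((m:ℚ)*q) = p*m := by field_simp
    rw [l1, l2] at e1
    exact e1
  -- p > q
  have hpq : (q:ℚ) < (p:ℚ) := by nlinarith [mul_pos hq0 hm0]
  have hpq0 : (0:ℚ) < (p:ℚ) - q := by linarith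
  have hd1 : (0:ℚ) < (m:ℚ)*n + 1 - m := by nlinarith
  -- the key consequence of hhigh
  have hkey : (p:ℚ)*((m:ℚ)-1) < (q:ℚ)*((n:ℚ)*((m:ℚ)-1)+1) := by
    rcases hhigh with h1 | h2
    · subst h1
      push_cast
      norm_num
      exact_mod_cast hq
    · by_cases hm1' : m = 1
      · exfalso
        subst hm1'
        push_cast at h2 hlow
        have h2' : (p:ℚ)/q < (n:ℚ) := by simpa using h2
        have hl' : (n:ℚ) + 1 ≤ (p:ℚ)/q := by simpa using hlow
        linarith
      · have hm2 : (2:ℤ) ≤ m := by omega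
        have hm2' : (0:ℚ) < (m:ℚ) - 1 := by
          have : (2:ℚ) ≤ (m:ℚ) := by exact_mod_cast hm2
          linarith
        have e1 := mul_lt_mul_of_pos_right h2 (mul_pos hm2' hq0)
        have l1 : ((p:ℚ)/q)*(((m:ℚ)-1)*q) = p*((m:ℚ)-1) := by field_simp
        have l2 : ((n:ℚ)+1/((m:ℚ)-1))*(((m:ℚ)-1)*q) = q*((n:ℚ)*((m:ℚ)-1)+1) := by
          field_simp
        rw [l1, l2] at e1
        exact e1
  -- the upper bound: ncf lα ≤ ncf lβ
  have hU : ncf (qcast lα) ≤ ncf (qcast lβ) := by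
    rw [hαval, hβval]
    have h1 : (p:ℚ)/((p:ℚ)-q) ≤ ((m:ℚ)*n+1)/((m:ℚ)*n+1-m) := by
      rw [div_le_div_iff₀ hpq0 hd1]
      have e : ((m:ℚ)*n+1)*((p:ℚ)-q) - (p:ℚ)*((m:ℚ)*n+1-m) = (p:ℚ)*m - q*((m:ℚ)*n+1) := by
        ring
      linarith
    linarith
  -- single-fraction form of the α value
  have hαfrac : (1:ℚ) + (p:ℚ)/((p:ℚ)-q) = (2*(p:ℚ) - q)/((p:ℚ)-q) := by
    field_simp
    ring
  rcases eq_or_lt_of_le hn with hn2 | hn2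
  · -- case n = 1 : lβ = [m+2]
    have hn2' : n = 1 := hn2.symm
    subst hn2'
    have hval : ncf (qcast [m+2]) = 1 + ((m:ℚ)*1+1)/((m:ℚ)*1+1-(m:ℚ)) := by
      show ((m+2 : ℤ) : ℚ) = _
      push_cast
      norm_num
      ring
    have hlβ : lβ = [m+2] := by
      apply ncf_unique lβ [m+2] hβne (List.cons_ne_nil _ _) hβ2
      · intro x hx
        simp only [List.mem_singleton] at hx
        omega
      · rw [hβval, hval]
        push_cast
        norm_num
    subst hlβ
    apply prefix_of_between _ _ hβne hαne hβ2 hα2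
    · -- low [m+2] = m+1 < ncf lα
      rw [hαval]
      show ((m+2:ℤ):ℚ) - 1 < _
      push_cast
      push_cast at hkey
      have h1 : (m:ℚ) < (p:ℚ)/((p:ℚ)-q) := by
        rw [lt_div_iff₀ hpq0]
        nlinarith
      linarith
    · exact hU
  · -- case n ≥ 2
    have hn2' : (2:ℤ) ≤ n := hn2
    obtain ⟨k, hk'⟩ : ∃ k : ℕ, (k:ℤ) = n - 2 := ⟨(n-2).toNat, Int.toNat_of_nonneg (by omega)⟩
    have hk : ((k:ℕ):ℚ) = (n:ℚ) - 2 := by exact_mod_cast hk'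
    have hmc : (2:ℤ) ≤ m + 1 := by omega
    -- positivity of the various denominators
    have hn2q : (2:ℚ) ≤ (n:ℚ) := by exact_mod_cast hn2'
    have haux1 : (0:ℚ) ≤ ((n:ℚ)-2)*((m:ℚ)-1) :=
      mul_nonneg (by linarith) (by linarith)
    have haux2 : (0:ℚ) ≤ ((n:ℚ)-2)*(m:ℚ) := mul_nonneg (by linarith) (by linarith)
    have haux3 : (0:ℚ) ≤ ((n:ℚ)-1)*((m:ℚ)-1) :=
      mul_nonneg (by linarith) (by linarith)
    have haux4 : (0:ℚ) ≤ ((n:ℚ)-1)*(m:ℚ) := mul_nonneg (by linarith) (by linarith)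
    have hA : (0:ℚ) < ((n:ℚ)-2+1)*((m:ℚ)+1) - ((n:ℚ)-2) := by
      have e : ((n:ℚ)-2+1)*((m:ℚ)+1) - ((n:ℚ)-2) = ((n:ℚ)-1)*(m:ℚ) + 1 := by ring
      linarith [haux4]
    have hB : (0:ℚ) < ((n:ℚ)-2)*((m:ℚ)+1) - ((n:ℚ)-2) + 1 := by
      have e : ((n:ℚ)-2)*((m:ℚ)+1) - ((n:ℚ)-2) + 1 = ((n:ℚ)-2)*(m:ℚ) + 1 := by ring
      linarith [haux2]
    have hG1 : (0:ℚ) < ((n:ℚ)-2+1)*((m:ℚ)+1) - 2*((n:ℚ)-2) - 1 := by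
      have e : ((n:ℚ)-2+1)*((m:ℚ)+1) - 2*((n:ℚ)-2) - 1 = ((n:ℚ)-1)*((m:ℚ)-1) + 1 := by
        ring
      linarith [haux3]
    have hG2 : (0:ℚ) < ((n:ℚ)-2)*((m:ℚ)+1) - 2*((n:ℚ)-2) + 1 := by
      have e : ((n:ℚ)-2)*((m:ℚ)+1) - 2*((n:ℚ)-2) + 1 = ((n:ℚ)-2)*((m:ℚ)-1) + 1 := by
        ring
      linarith [haux1]
    -- value of the model list
    have hval : ncf (qcast (3 :: t2 k (m+1))) = 1 + ((m:ℚ)*n+1)/((m:ℚ)*n+1-(m:ℚ)) := by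
      rw [ncf_qcast_cons _ _ (t2_ne _ _), t2_ncf _ _ hmc]
      push_cast
      rw [hk]
      rw [one_div_div]
      rw [sub_div' hA.ne', add_div' _ _ _ hd1.ne', div_eq_div_iff hA.ne' hd1.ne']
      ring
    have hlβ : lβ = 3 :: t2 k (m+1) := by
      apply ncf_unique lβ _ hβne (List.cons_ne_nil _ _) hβ2
      · intro x hx
        rcases List.mem_cons.mp hx with rfl | hx'
        · norm_num
        · exact t2_mem k (m+1) hmc x hx'
      · rw [hβval, hval]
    subst hlβ
    apply prefix_of_between _ _ hβne hαne hβ2 hα2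
    · -- low bound
      rw [hαval, hαfrac, low_cons _ _ (t2_ne _ _), t2_low _ _ hmc]
      push_cast
      rw [hk]
      rw [one_div_div]
      rw [sub_div' hG1.ne', div_lt_div_iff₀ hG1 hpq0]
      have e : (2*(p:ℚ) - q)*(((n:ℚ)-2+1)*((m:ℚ)+1) - 2*((n:ℚ)-2) - 1)
          - ((3:ℚ)*(((n:ℚ)-2+1)*((m:ℚ)+1) - 2*((n:ℚ)-2) - 1) - (((n:ℚ)-2)*((m:ℚ)+1) - 2*((n:ℚ)-2) + 1))*((p:ℚ)-q)
          = (q:ℚ)*((n:ℚ)*((m:ℚ)-1)+1) - (p:ℚ)*((m:ℚ)-1) := by ring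
      linarith [hkey, e]
    · exact hU
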